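/- Let M be an irreducible nonnegative square real matrix. Then the spectral radius δ₀ of M is an eigenvalue of M of algebraic multiplicity one, and δ₀ ≥ |δ| for every eigenvalue δ of M. -/

import Mathlib

open Matrix Polynomial Complex Filter

attribute [local instance] Matrix.linftyOpNormedRing Matrix.linftyOpNormedAlgebra

namespace PFAux

variable {n : ℕ}


variable {n : ℕ}

lemma pow_entries_nonneg (M : Matrix (Fin n) (Fin n) ℝ) (h : ∀ i j, 0 ≤ M i j) (k : ℕ) :
    ∀ i j, 0 ≤ (M ^ k) i j := by
  induction k with
  | zero => intro i j; by_cases hij : i = j <;> simp [hij, Matrix.one_apply]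
  | succ k ih =>
    intro i j
    rw [pow_succ, Matrix.mul_apply]
    exact Finset.sum_nonneg fun l _ => mul_nonneg (ih i l) (h l j)

lemma one_add_nonneg (M : Matrix (Fin n) (Fin n) ℝ) (h : ∀ i j, 0 ≤ M i j) :
    ∀ i j, 0 ≤ (1 + M) i j := by
  intro i j
  have : (0:ℝ) ≤ (1 : Matrix (Fin n) (Fin n) ℝ) i j := by
    by_cases hij : i = j <;> simp [hij, Matrix.one_apply]
  simpa [Matrix.add_apply] using add_nonneg this (h i j)

lemma exists_pow_pos (M : Matrix (Fin n) (Fin n) ℝ) (h : ∀ i j, 0 ≤ M i j)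
    (hirr : ∀ i j : Fin n, Relation.ReflTransGen (fun a b => M a b ≠ 0) i j) :
    ∃ K : ℕ, ∀ i j, 0 < ((1 + M) ^ K) i j := by
  have hQnn := one_add_nonneg M h
  have hPnn := pow_entries_nonneg (1 + M) hQnn
  have mono : ∀ (i j : Fin n) (m : ℕ), 0 < ((1 + M) ^ m) i j →
      0 < ((1 + M) ^ (m + 1)) i j := by
    intro i j m hm
    rw [pow_succ, Matrix.mul_apply]
    have hterm : 0 < ((1 + M) ^ m) i j * (1 + M) j j := by
      have : (1:ℝ) ≤ (1 + M) j j := by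
        simpa [Matrix.add_apply, Matrix.one_apply] using h j j
      exact mul_pos hm (lt_of_lt_of_le one_pos this)
    refine Finset.sum_pos' (fun l _ => mul_nonneg (hPnn m i l) (hQnn l j)) ⟨j, Finset.mem_univ j, hterm⟩
  have step : ∀ i j : Fin n, ∃ m : ℕ, 0 < ((1 + M) ^ m) i j := by
    intro i j
    induction hirr i j with
    | refl => exact ⟨0, by simp⟩
    | @tail b c hb hbc ih =>
      obtain ⟨m, hm⟩ := ih
      refine ⟨m + 1, ?_⟩
      rw [pow_succ, Matrix.mul_apply]
      have hbc' : 0 < (1 + M) b c := by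
        have : 0 < M b c := lt_of_le_of_ne (h b c) (Ne.symm hbc)
        have h1 : (0:ℝ) ≤ (1 : Matrix (Fin n) (Fin n) ℝ) b c := by
          by_cases hij : b = c <;> simp [hij, Matrix.one_apply]
        have := add_pos_of_nonneg_of_pos h1 this
        simpa [Matrix.add_apply] using this
      refine Finset.sum_pos' (fun l _ => mul_nonneg (hPnn m i l) (hQnn l c))
        ⟨b, Finset.mem_univ b, mul_pos hm hbc'⟩
  choose f hf using step
  refine ⟨Finset.univ.sup (fun p : Fin n × Fin n => f p.1 p.2), fun i j => ?_⟩
  have hle : f i j ≤ Finset.univ.sup (fun p : Fin n × Fin n => f p.1 p.2) :=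
    Finset.le_sup (f := fun p : Fin n × Fin n => f p.1 p.2) (Finset.mem_univ (i, j))
  exact Nat.le_induction (hf i j) (fun m _ hm => mono i j m hm) _ hle

lemma smooth_pos (M : Matrix (Fin n) (Fin n) ℝ) (h : ∀ i j, 0 ≤ M i j)
    {K : ℕ} (hK : ∀ i j, 0 < ((1 + M) ^ K) i j)
    (u : Fin n → ℝ) (hu : ∀ i, 0 ≤ u i) (hne : u ≠ 0) :
    ∀ i, 0 < (((1 + M) ^ K) *ᵥ u) i := by
  intro i
  obtain ⟨k, hk⟩ := Function.ne_iff.mp hne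
  have hk' : 0 < u k := lt_of_le_of_ne (hu k) (Ne.symm hk)
  rw [Matrix.mulVec, dotProduct]
  exact Finset.sum_pos' (fun l _ => mul_nonneg (le_of_lt (hK i l)) (hu l))
    ⟨k, Finset.mem_univ k, mul_pos (hK i k) hk'⟩

lemma eval_charpoly (A : Matrix (Fin n) (Fin n) ℂ) (r : ℂ) :
    A.charpoly.eval r = (Matrix.scalar (Fin n) r - A).det := by
  rw [Matrix.charpoly, eval_det, matPolyEquiv_charmatrix]
  simp

lemma eig_pos (M : Matrix (Fin n) (Fin n) ℝ) (h : ∀ i j, 0 ≤ M i j)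
    (hirr : ∀ i j : Fin n, Relation.ReflTransGen (fun a b => M a b ≠ 0) i j)
    (δ₀ : ℝ) (u : Fin n → ℝ) (hu : ∀ i, 0 ≤ u i) (hne : u ≠ 0)
    (heq : M *ᵥ u = δ₀ • u) : ∀ i, 0 < u i := by
  have key : ∀ i j : Fin n, Relation.ReflTransGen (fun a b => M a b ≠ 0) i j →
      u i = 0 → u j = 0 := by
    intro i j hij
    induction hij with
    | refl => exact fun hi => hi
    | @tail b c hb hbc ih =>
      intro hi
      have hub : u b = 0 := ih hi
      have hMub : (M *ᵥ u) b = 0 := by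
        rw [heq]; simp [hub]
      rw [Matrix.mulVec, dotProduct] at hMub
      have := (Finset.sum_eq_zero_iff_of_nonneg
        (fun l _ => mul_nonneg (h b l) (hu l))).mp hMub c (Finset.mem_univ c)
      rcases mul_eq_zero.mp this with h1 | h2
      · exact absurd h1 hbc
      · exact h2
  obtain ⟨k, hk⟩ := Function.ne_iff.mp hne
  intro i
  rcases (hu i).lt_or_eq with h1 | h1
  · exact h1
  · exact absurd (key i k (hirr i k) h1.symm) hk

lemma scalar_eq_algebraMap (r : ℂ) :
    Matrix.scalar (Fin n) r = algebraMap ℂ (Matrix (Fin n) (Fin n) ℂ) r := by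
  ext i j
  by_cases hij : i = j <;>
    simp [hij, Matrix.scalar_apply, Matrix.algebraMap_matrix_apply, Matrix.diagonal_apply]


lemma mem_roots_of_mem_spectrum (A : Matrix (Fin n) (Fin n) ℂ) {μ : ℂ}
    (hμ : μ ∈ spectrum ℂ A) : μ ∈ A.charpoly.roots := by
  rw [spectrum.mem_iff] at hμ
  have hdet : (Matrix.scalar (Fin n) μ - A).det = 0 := by
    by_contra hd
    exact hμ (by
      rw [scalar_eq_algebraMap] at hd
      exact (Matrix.isUnit_iff_isUnit_det _).mpr (isUnit_iff_ne_zero.mpr hd))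
  rw [Polynomial.mem_roots (A.charpoly_monic.ne_zero)]
  rw [Polynomial.IsRoot, eval_charpoly, hdet]

lemma map_pow_apply (M : Matrix (Fin n) (Fin n) ℝ) (k : ℕ) :
    (M.map (Complex.ofReal)) ^ k = (M ^ k).map (Complex.ofReal) := by
  have h1 : ∀ N : Matrix (Fin n) (Fin n) ℝ, N.map (Complex.ofReal) =
      Complex.ofRealHom.mapMatrix N := fun N => rfl
  rw [h1, h1, ← map_pow]

/-- Gelfand-type bound -/
lemma gelfand_bound (hn : 0 < n) (M : Matrix (Fin n) (Fin n) ℝ) (h : ∀ i j, 0 ≤ M i j)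
    (δ₀ : ℝ)
    (hub : ∀ δ ∈ (M.map (Complex.ofReal)).charpoly.roots, ‖δ‖ ≤ δ₀)
    (z : Fin n → ℝ) (hz : ∀ i, 0 < z i) (t : ℝ) (ht : 0 < t)
    (hMz : ∀ i, t * z i ≤ (M *ᵥ z) i) : t ≤ δ₀ := by
  classical
  set A := M.map (Complex.ofReal) with hA
  -- δ₀ is nonnegative
  have hδ₀0 : 0 ≤ δ₀ := by
    obtain ⟨x, hx⟩ := Complex.exists_root (f := A.charpoly) (by
      rw [Matrix.charpoly_degree_eq_dim, Fintype.card_fin]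
      exact_mod_cast hn)
    have : x ∈ A.charpoly.roots := by
      rw [Polynomial.mem_roots (A.charpoly_monic.ne_zero)]; exact hx
    exact le_trans (norm_nonneg x) (hub x this)
  haveI : CompleteSpace (Matrix (Fin n) (Fin n) ℂ) := FiniteDimensional.complete ℂ _
  -- spectral radius bounded by δ₀
  have hsr : spectralRadius ℂ A ≤ ENNReal.ofReal δ₀ := by
    rw [spectralRadius]
    refine iSup₂_le fun μ hμ => ?_
    rw [← enorm_eq_nnnorm, ← ofReal_norm]
    exact ENNReal.ofReal_le_ofReal
      (hub μ (mem_roots_of_mem_spectrum A hμ))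
  -- iterated subinvariance
  have hk : ∀ (k : ℕ) (i : Fin n), t ^ k * z i ≤ ((M ^ k) *ᵥ z) i := by
    intro k
    induction k with
    | zero => intro i; simp [Matrix.one_mulVec]
    | succ k ih =>
      intro i
      have h1 : (M ^ (k + 1)) *ᵥ z = M *ᵥ ((M ^ k) *ᵥ z) := by
        rw [Matrix.mulVec_mulVec, pow_succ']
      rw [h1, Matrix.mulVec, dotProduct]
      have h2 : ∀ j, M i j * (t ^ k * z j) ≤ M i j * ((M ^ k) *ᵥ z) j := fun j =>
        mul_le_mul_of_nonneg_left (ih j) (h i j)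
      calc t ^ (k + 1) * z i = t ^ k * (t * z i) := by ring
        _ ≤ t ^ k * (M *ᵥ z) i := by
            exact mul_le_mul_of_nonneg_left (hMz i) (pow_nonneg ht.le k)
        _ = ∑ j, M i j * (t ^ k * z j) := by
            rw [Matrix.mulVec, dotProduct, Finset.mul_sum]; congr 1; ext j; ring
        _ ≤ ∑ j, M i j * ((M ^ k) *ᵥ z) j := Finset.sum_le_sum fun j _ => h2 j
  -- norm lower bound
  have hnorm : ∀ k : ℕ, t ^ k ≤ ‖A ^ k‖ := by
    intro k
    obtain ⟨i₀, -, hmax⟩ := Finset.exists_max_image Finset.univ z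
      ⟨⟨0, hn⟩, Finset.mem_univ _⟩
    set z' : Fin n → ℂ := fun i => ((z i : ℝ) : ℂ) with hz'
    have hznorm : ‖z'‖ = z i₀ := by
      refine le_antisymm ?_ ?_
      · refine (pi_norm_le_iff_of_nonneg (hz i₀).le).mpr fun i => ?_
        simp only [hz', Complex.norm_real]
        rw [Real.norm_eq_abs, _root_.abs_of_nonneg (hz i).le]
        exact hmax i (Finset.mem_univ i)
      · have := norm_le_pi_norm z' i₀
        simpa [hz', Real.norm_eq_abs, _root_.abs_of_nonneg (hz i₀).le] using this
    have hentry : ((A ^ k) *ᵥ z') i₀ = (((M ^ k) *ᵥ z) i₀ : ℝ) := by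
      rw [map_pow_apply]
      simp [hz', Matrix.mulVec, dotProduct, Matrix.map_apply]
    have h1 : t ^ k * z i₀ ≤ ‖((A ^ k) *ᵥ z') i₀‖ := by
      rw [hentry, Complex.norm_real, Real.norm_eq_abs]
      exact le_trans (hk k i₀) (le_abs_self _)
    have h2 : ‖((A ^ k) *ᵥ z') i₀‖ ≤ ‖(A ^ k) *ᵥ z'‖ := norm_le_pi_norm _ i₀
    have h3 : ‖(A ^ k) *ᵥ z'‖ ≤ ‖A ^ k‖ * ‖z'‖ := Matrix.linfty_opNorm_mulVec _ _
    rw [hznorm] at h3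
    have := le_trans h1 (le_trans h2 h3)
    exact le_of_mul_le_mul_right this (hz i₀)
  -- Gelfand's formula
  have hlim := spectrum.pow_nnnorm_pow_one_div_tendsto_nhds_spectralRadius A
  have hev : ∀ᶠ k : ℕ in atTop, ENNReal.ofReal t ≤ (‖A ^ k‖₊ : ENNReal) ^ (1 / (k : ℝ)) := by
    refine eventually_atTop.mpr ⟨1, fun k hk1 => ?_⟩
    have hkne : (k : ℝ) ≠ 0 := Nat.cast_ne_zero.mpr (Nat.one_le_iff_ne_zero.mp hk1)
    have h1 : (ENNReal.ofReal t) ^ (k : ℕ) ≤ (‖A ^ k‖₊ : ENNReal) := by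
      rw [← ENNReal.ofReal_pow ht.le, ← enorm_eq_nnnorm, ← ofReal_norm]
      exact ENNReal.ofReal_le_ofReal (hnorm k)
    have h2 := ENNReal.rpow_le_rpow (z := 1 / (k : ℝ))
      h1 (by positivity)
    calc ENNReal.ofReal t
        = ((ENNReal.ofReal t) ^ (k : ℕ)) ^ (1 / (k : ℝ)) := by
          rw [← ENNReal.rpow_natCast, ← ENNReal.rpow_mul, mul_one_div_cancel hkne,
            ENNReal.rpow_one]
      _ ≤ (‖A ^ k‖₊ : ENNReal) ^ (1 / (k : ℝ)) := h2
  have hfin : ENNReal.ofReal t ≤ ENNReal.ofReal δ₀ :=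
    le_trans (ge_of_tendsto hlim hev) hsr
  exact (ENNReal.ofReal_le_ofReal_iff hδ₀0).mp hfin


lemma subinv_eq (hn : 0 < n) (M : Matrix (Fin n) (Fin n) ℝ) (h : ∀ i j, 0 ≤ M i j)
    (hirr : ∀ i j : Fin n, Relation.ReflTransGen (fun a b => M a b ≠ 0) i j)
    (δ₀ : ℝ) (hδ₀0 : 0 ≤ δ₀)
    (hub : ∀ δ ∈ (M.map (Complex.ofReal)).charpoly.roots, ‖δ‖ ≤ δ₀)
    (u : Fin n → ℝ) (hu : ∀ i, 0 ≤ u i) (hne : u ≠ 0)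
    (hsub : ∀ i, δ₀ * u i ≤ (M *ᵥ u) i) :
    M *ᵥ u = δ₀ • u := by
  classical
  by_contra hne2
  set w : Fin n → ℝ := M *ᵥ u - δ₀ • u with hw
  have hw0 : ∀ i, 0 ≤ w i := fun i => by
    simp only [hw, Pi.sub_apply, Pi.smul_apply, smul_eq_mul, sub_nonneg]
    exact hsub i
  have hwne : w ≠ 0 := fun hc => hne2 (by rwa [hw, sub_eq_zero] at hc)
  obtain ⟨K, hK⟩ := exists_pow_pos M h hirr
  set P := (1 + M) ^ K with hP
  have hzpos := smooth_pos M h hK u hu hne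
  have hPw := smooth_pos M h hK w hw0 hwne
  set z : Fin n → ℝ := P *ᵥ u with hz
  have hcomm : M * P = P * M := by
    have : Commute M (1 + M) := (Commute.one_right M).add_right (Commute.refl M)
    exact (this.pow_right K).eq
  have hkey : M *ᵥ z = δ₀ • z + P *ᵥ w := by
    have h1 : M *ᵥ z = P *ᵥ (M *ᵥ u) := by
      rw [hz, Matrix.mulVec_mulVec, Matrix.mulVec_mulVec, hcomm]
    rw [h1, hw, Matrix.mulVec_sub, Matrix.mulVec_smul]
    abel
  haveI : Nonempty (Fin n) := ⟨⟨0, hn⟩⟩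
  set ε : ℝ := Finset.univ.inf' Finset.univ_nonempty (fun i => (P *ᵥ w) i / z i) with hε
  have hεpos : 0 < ε := by
    rw [hε, Finset.lt_inf'_iff]
    exact fun i _ => div_pos (hPw i) (hzpos i)
  have hMz : ∀ i, (δ₀ + ε) * z i ≤ (M *ᵥ z) i := by
    intro i
    have h1 : ε ≤ (P *ᵥ w) i / z i := Finset.inf'_le _ (Finset.mem_univ i)
    have h2 : ε * z i ≤ (P *ᵥ w) i := by
      rw [← div_mul_cancel₀ ((P *ᵥ w) i) (hzpos i).ne']
      exact mul_le_mul_of_nonneg_right h1 (hzpos i).le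
    have : (M *ᵥ z) i = δ₀ * z i + (P *ᵥ w) i := by
      rw [hkey]; simp
    rw [this]; nlinarith
  have := gelfand_bound hn M h δ₀ hub z hzpos (δ₀ + ε) (by linarith) hMz
  linarith

lemma coe_mulVec (M : Matrix (Fin n) (Fin n) ℝ) (x : Fin n → ℝ) (i : Fin n) :
    ((M.map (Complex.ofReal)) *ᵥ (fun j => ((x j : ℝ) : ℂ))) i = (((M *ᵥ x) i : ℝ) : ℂ) := by
  simp [Matrix.mulVec, dotProduct, Matrix.map_apply]

lemma abs_subinv (M : Matrix (Fin n) (Fin n) ℝ) (h : ∀ i j, 0 ≤ M i j)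
    (δ : ℂ) (v : Fin n → ℂ) (hAv : (M.map (Complex.ofReal)) *ᵥ v = δ • v) :
    ∀ i, ‖δ‖ * ‖v i‖ ≤ (M *ᵥ (fun j => ‖v j‖)) i := by
  intro i
  have h2 : ((M.map (Complex.ofReal)) *ᵥ v) i = ∑ j, (M i j : ℂ) * v j := by
    simp [Matrix.mulVec, dotProduct, Matrix.map_apply]
  have h1 : ‖δ‖ * ‖v i‖ = ‖∑ j, (M i j : ℂ) * v j‖ := by
    rw [← h2, hAv]
    show ‖δ‖ * ‖v i‖ = ‖δ * v i‖
    rw [norm_mul]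
  rw [h1]
  refine le_trans (norm_sum_le _ _) ?_
  rw [Matrix.mulVec, dotProduct]
  refine le_of_eq (Finset.sum_congr rfl fun j _ => ?_)
  rw [norm_mul, Complex.norm_real, Real.norm_eq_abs, _root_.abs_of_nonneg (h i j)]

lemma eigvec_abs_eig (hn : 0 < n) (M : Matrix (Fin n) (Fin n) ℝ) (h : ∀ i j, 0 ≤ M i j)
    (hirr : ∀ i j : Fin n, Relation.ReflTransGen (fun a b => M a b ≠ 0) i j)
    (δ₀ : ℝ)
    (hub : ∀ δ ∈ (M.map (Complex.ofReal)).charpoly.roots, ‖δ‖ ≤ δ₀)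
    (δ : ℂ) (hδ : ‖δ‖ = δ₀)
    (v : Fin n → ℂ) (hv : v ≠ 0) (hAv : (M.map (Complex.ofReal)) *ᵥ v = δ • v) :
    (∀ i, 0 < ‖v i‖) ∧
      M *ᵥ (fun j => ‖v j‖) = δ₀ • (fun j => ‖v j‖) := by
  set u : Fin n → ℝ := fun j => ‖v j‖ with hud
  have hu : ∀ i, 0 ≤ u i := fun i => norm_nonneg _
  have hune : u ≠ 0 := by
    obtain ⟨k, hk⟩ := Function.ne_iff.mp hv
    have hk' : v k ≠ 0 := by simpa using hk
    exact Function.ne_iff.mpr ⟨k, by simp [hud, hk']⟩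
  have hδ₀0 : 0 ≤ δ₀ := hδ ▸ norm_nonneg δ
  have hsub : ∀ i, δ₀ * u i ≤ (M *ᵥ u) i := fun i => by
    have := abs_subinv M h δ v hAv i; rwa [hδ] at this
  have heq := subinv_eq hn M h hirr δ₀ hδ₀0 hub u hu hune hsub
  exact ⟨eig_pos M h hirr δ₀ u hu hune heq, heq⟩

lemma scalar_mulVec (r : ℂ) (v : Fin n → ℂ) :
    (Matrix.scalar (Fin n) r) *ᵥ v = r • v := by
  ext i
  simp [Matrix.mulVec, dotProduct, Matrix.scalar_apply, Matrix.diagonal_apply,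
    Finset.sum_ite_eq, Finset.mem_univ]

lemma exists_eigvec (A : Matrix (Fin n) (Fin n) ℂ) {δ : ℂ} (hδ : δ ∈ A.charpoly.roots) :
    ∃ v : Fin n → ℂ, v ≠ 0 ∧ A *ᵥ v = δ • v := by
  have hroot : A.charpoly.IsRoot δ := (Polynomial.mem_roots'.mp hδ).2
  have det0 : (Matrix.scalar (Fin n) δ - A).det = 0 := by
    rw [← eval_charpoly]; exact hroot
  obtain ⟨v, hvne, hv⟩ := (Matrix.exists_mulVec_eq_zero_iff).mpr det0
  refine ⟨v, hvne, ?_⟩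
  rw [Matrix.sub_mulVec, sub_eq_zero, scalar_mulVec] at hv
  exact hv.symm

lemma perron (hn : 0 < n) (M : Matrix (Fin n) (Fin n) ℝ) (h : ∀ i j, 0 ≤ M i j)
    (hirr : ∀ i j : Fin n, Relation.ReflTransGen (fun a b => M a b ≠ 0) i j)
    (δ₀ : ℝ)
    (hub : ∀ δ ∈ (M.map (Complex.ofReal)).charpoly.roots, ‖δ‖ ≤ δ₀)
    (hmem : ∃ δ ∈ (M.map (Complex.ofReal)).charpoly.roots, ‖δ‖ = δ₀) :
    ∃ u : Fin n → ℝ, (∀ i, 0 < u i) ∧ M *ᵥ u = δ₀ • u := by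
  obtain ⟨δ, hδr, hδa⟩ := hmem
  obtain ⟨v, hvne, hAv⟩ := exists_eigvec (M.map (Complex.ofReal)) hδr
  obtain ⟨h1, h2⟩ := eigvec_abs_eig hn M h hirr δ₀ hub δ hδa v hvne hAv
  exact ⟨fun j => ‖v j‖, h1, h2⟩

lemma charpoly_transpose (A : Matrix (Fin n) (Fin n) ℂ) : Aᵀ.charpoly = A.charpoly := by
  have h : charmatrix Aᵀ = (charmatrix A)ᵀ := by
    refine Matrix.ext fun i j => ?_
    rw [Matrix.transpose_apply]
    by_cases hij : i = j
    · subst hij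
      rw [charmatrix_apply_eq, charmatrix_apply_eq, Matrix.transpose_apply]
    · rw [charmatrix_apply_ne _ _ _ hij, charmatrix_apply_ne _ _ _ (Ne.symm hij),
        Matrix.transpose_apply]
  rw [Matrix.charpoly, Matrix.charpoly, h, Matrix.det_transpose]

lemma charpoly_shift (A : Matrix (Fin n) (Fin n) ℂ) (r : ℂ) :
    A.charpoly.comp (X + C r) = (A - r • 1).charpoly := by
  let f : ℂ[X] →+* ℂ[X] := Polynomial.eval₂RingHom Polynomial.C (X + C r)
  have hcomp : A.charpoly.comp (X + C r) = f A.charpoly := rfl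
  have hmap : (charmatrix A).map f = charmatrix (A - r • 1) := by
    refine Matrix.ext fun i j => ?_
    by_cases hij : i = j
    · subst hij
      rw [Matrix.map_apply, charmatrix_apply_eq, charmatrix_apply_eq]
      have h1 : f (X - C (A i i)) = X + C r - C (A i i) := by
        simp [f]
      rw [h1, Matrix.sub_apply, Matrix.smul_apply, Matrix.one_apply_eq, smul_eq_mul, mul_one,
        C_sub]
      ring
    · rw [Matrix.map_apply, charmatrix_apply_ne _ _ _ hij, charmatrix_apply_ne _ _ _ hij]
      have h1 : f (-C (A i j)) = -C (A i j) := by simp [f]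
      rw [h1, Matrix.sub_apply, Matrix.smul_apply, Matrix.one_apply_ne hij, smul_zero, sub_zero]
  rw [hcomp, Matrix.charpoly, Matrix.charpoly, RingHom.map_det, RingHom.mapMatrix_apply, hmap]

lemma scalar_mulVec_real (r : ℝ) (v : Fin n → ℝ) :
    (Matrix.scalar (Fin n) r) *ᵥ v = r • v := by
  ext i
  simp [Matrix.mulVec, dotProduct, Matrix.scalar_apply, Matrix.diagonal_apply,
    Finset.sum_ite_eq, Finset.mem_univ]

end PFAux

/-- Perron–Frobenius: if `M` is an irreducible nonnegative square real matrix
(irreducible meaning that the directed graph with an edge `i → j` whenever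
`M i j ≠ 0` is strongly connected), and `δ₀` is its spectral radius (the maximum
of the moduli of its complex eigenvalues), then `δ₀` is an eigenvalue of `M` of
algebraic multiplicity one, and `δ₀ ≥ |δ|` for every eigenvalue `δ` of `M`. -/
theorem stmt_3 (n : ℕ) (hn : 0 < n) (M : Matrix (Fin n) (Fin n) ℝ)
    (hnonneg : ∀ i j, 0 ≤ M i j)
    (hirr : ∀ i j : Fin n, Relation.ReflTransGen (fun a b => M a b ≠ 0) i j)
    (δ₀ : ℝ)
    (hδ₀ : IsGreatest {x : ℝ | ∃ δ ∈ (M.map (Complex.ofReal)).charpoly.roots,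
        ‖δ‖ = x} δ₀) :
    ((δ₀ : ℂ) ∈ (M.map (Complex.ofReal)).charpoly.roots ∧
      (M.map (Complex.ofReal)).charpoly.rootMultiplicity (δ₀ : ℂ) = 1) ∧
    ∀ δ ∈ (M.map (Complex.ofReal)).charpoly.roots, ‖δ‖ ≤ δ₀ := by
  classical
  have hub : ∀ δ ∈ (M.map (Complex.ofReal)).charpoly.roots, ‖δ‖ ≤ δ₀ :=
    fun δ hδ => hδ₀.2 ⟨δ, hδ, rfl⟩
  obtain ⟨δm, hδm, hδma⟩ := hδ₀.1
  have hδ₀0 : 0 ≤ δ₀ := hδma ▸ norm_nonneg δm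
  obtain ⟨u, hu, huEq⟩ := PFAux.perron hn M hnonneg hirr δ₀ hub ⟨δm, hδm, hδma⟩
  have hTch : ((Mᵀ).map (Complex.ofReal)).charpoly = (M.map (Complex.ofReal)).charpoly := by
    rw [Matrix.transpose_map, PFAux.charpoly_transpose]
  have hirrT : ∀ i j : Fin n, Relation.ReflTransGen (fun a b => Mᵀ a b ≠ 0) i j := by
    intro i j
    exact (hirr j i).swap
  obtain ⟨w, hw, hwEq⟩ := PFAux.perron hn Mᵀ (fun i j => hnonneg j i) hirrT δ₀
    (by rw [hTch]; exact hub) (by rw [hTch]; exact ⟨δm, hδm, hδma⟩)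
  have hune : u ≠ 0 := by
    intro hc
    exact absurd (congrFun hc ⟨0, hn⟩) (hu ⟨0, hn⟩).ne'
  -- δ₀ is a root
  have hroot : ((δ₀ : ℝ) : ℂ) ∈ (M.map (Complex.ofReal)).charpoly.roots := by
    have hMdet : (Matrix.scalar (Fin n) δ₀ - M).det = 0 := by
      rw [← Matrix.exists_mulVec_eq_zero_iff]
      refine ⟨u, hune, ?_⟩
      rw [Matrix.sub_mulVec, PFAux.scalar_mulVec_real, huEq, sub_self]
    have hmapdet : (Matrix.scalar (Fin n) ((δ₀ : ℝ) : ℂ) - M.map (Complex.ofReal)).det = 0 := by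
      have hmm : Matrix.scalar (Fin n) ((δ₀ : ℝ) : ℂ) - M.map (Complex.ofReal) =
          (Matrix.scalar (Fin n) δ₀ - M).map (Complex.ofReal) := by
        ext i j
        by_cases hij : i = j <;>
          simp [hij, Matrix.scalar_apply, Matrix.diagonal_apply, Matrix.map_apply]
      rw [hmm]
      have h3 := RingHom.map_det Complex.ofRealHom (Matrix.scalar (Fin n) δ₀ - M)
      rw [RingHom.mapMatrix_apply] at h3
      rw [show ((Matrix.scalar (Fin n) δ₀ - M).map (Complex.ofReal)) =
          ((Matrix.scalar (Fin n) δ₀ - M).map ⇑Complex.ofRealHom) from rfl, ← h3, hMdet,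
        map_zero]
    rw [Polynomial.mem_roots ((M.map (Complex.ofReal)).charpoly_monic.ne_zero),
      Polynomial.IsRoot, PFAux.eval_charpoly, hmapdet]
  refine ⟨⟨hroot, ?_⟩, hub⟩
  -- multiplicity one
  set A : Matrix (Fin n) (Fin n) ℂ := M.map (Complex.ofReal) with hA
  set B : Matrix (Fin n) (Fin n) ℂ := A - ((δ₀ : ℝ) : ℂ) • 1 with hB
  set ψ : Module.End ℂ (Fin n → ℂ) := Matrix.toLin' B with hψ
  set u' : Fin n → ℂ := fun i => ((u i : ℝ) : ℂ) with hu'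
  have hu'i : ∀ i, u' i ≠ 0 := fun i => by
    simp [hu', Complex.ofReal_ne_zero, (hu i).ne']
  have hu'ne : u' ≠ 0 := fun hc => absurd (congrFun hc ⟨0, hn⟩) (hu'i ⟨0, hn⟩)
  have hAu' : A *ᵥ u' = ((δ₀ : ℝ) : ℂ) • u' := by
    funext i
    rw [hA]
    rw [show (M.map (Complex.ofReal) *ᵥ u') i = (((M *ᵥ u) i : ℝ) : ℂ) from
      PFAux.coe_mulVec M u i]
    rw [huEq]
    simp [hu']
  have hψdef : ∀ x : Fin n → ℂ, ψ x = A *ᵥ x - ((δ₀ : ℝ) : ℂ) • x := by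
    intro x
    rw [hψ, Matrix.toLin'_apply, hB, Matrix.sub_mulVec, Matrix.smul_mulVec,
      Matrix.one_mulVec]
  have hkerψ : ∀ x, ψ x = 0 ↔ A *ᵥ x = ((δ₀ : ℝ) : ℂ) • x := fun x => by
    rw [hψdef, sub_eq_zero]
  have habs : ‖((δ₀ : ℝ) : ℂ)‖ = δ₀ := by
    rw [Complex.norm_real, Real.norm_eq_abs, _root_.abs_of_nonneg hδ₀0]
  have hvpos : ∀ v : Fin n → ℂ, v ≠ 0 → A *ᵥ v = ((δ₀ : ℝ) : ℂ) • v →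
      ∀ i, v i ≠ 0 := by
    intro v hv0 hv i
    have := (PFAux.eigvec_abs_eig hn M hnonneg hirr δ₀ hub ((δ₀ : ℝ) : ℂ) habs v hv0 hv).1 i
    intro hc
    rw [hc] at this
    simp at this
  have hkspan : LinearMap.ker ψ = Submodule.span ℂ {u'} := by
    apply le_antisymm
    · intro v hv
      rw [LinearMap.mem_ker, hkerψ] at hv
      by_cases hv0 : v = 0
      · simp [hv0]
      · set i₀ : Fin n := ⟨0, hn⟩ with hi₀
        set c : ℂ := v i₀ / u' i₀ with hc
        have hd : A *ᵥ (v - c • u') = ((δ₀ : ℝ) : ℂ) • (v - c • u') := by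
          rw [Matrix.mulVec_sub, Matrix.mulVec_smul, hv, hAu']
          module
        by_cases hd0 : v - c • u' = 0
        · rw [show v = c • u' from by rwa [sub_eq_zero] at hd0]
          exact Submodule.smul_mem _ _ (Submodule.mem_span_singleton_self u')
        · exfalso
          have hzero : (v - c • u') i₀ = 0 := by
            simp only [Pi.sub_apply, Pi.smul_apply, smul_eq_mul, hc]
            rw [div_mul_cancel₀ _ (hu'i i₀)]
            ring
          exact hvpos _ hd0 hd i₀ hzero
    · rw [Submodule.span_singleton_le_iff_mem, LinearMap.mem_ker, hkerψ]
      exact hAu'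
  -- the left eigenvector functional kills the range of ψ
  have hcol : ∀ j, (∑ i, ((w i : ℝ) : ℂ) * ((M i j : ℝ) : ℂ)) = ((δ₀ : ℝ) : ℂ) * ((w j : ℝ) : ℂ) := by
    intro j
    have hr : (∑ i, w i * M i j) = δ₀ * w j := by
      have h1 := congrFun hwEq j
      simp only [Matrix.mulVec, dotProduct, Matrix.transpose_apply, Pi.smul_apply,
        smul_eq_mul] at h1
      rw [← h1]
      exact Finset.sum_congr rfl fun i _ => mul_comm _ _
    have h2 := congrArg (fun r : ℝ => (r : ℂ)) hr
    push_cast at h2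
    exact h2
  have hWA : ∀ x : Fin n → ℂ, (∑ i, ((w i : ℝ) : ℂ) * (A *ᵥ x) i) =
      ((δ₀ : ℝ) : ℂ) * ∑ i, ((w i : ℝ) : ℂ) * x i := by
    intro x
    calc ∑ i, ((w i : ℝ) : ℂ) * (A *ᵥ x) i
        = ∑ i, ∑ j, ((w i : ℝ) : ℂ) * (((M i j : ℝ) : ℂ) * x j) := by
          refine Finset.sum_congr rfl fun i _ => ?_
          rw [show (A *ᵥ x) i = ∑ j, ((M i j : ℝ) : ℂ) * x j from by
            simp [hA, Matrix.mulVec, dotProduct, Matrix.map_apply], Finset.mul_sum]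
      _ = ∑ j, (∑ i, ((w i : ℝ) : ℂ) * ((M i j : ℝ) : ℂ)) * x j := by
          rw [Finset.sum_comm]
          refine Finset.sum_congr rfl fun j _ => ?_
          rw [Finset.sum_mul]
          exact Finset.sum_congr rfl fun i _ => by ring
      _ = ∑ j, (((δ₀ : ℝ) : ℂ) * ((w j : ℝ) : ℂ)) * x j := by
          exact Finset.sum_congr rfl fun j _ => by rw [hcol j]
      _ = ((δ₀ : ℝ) : ℂ) * ∑ j, ((w j : ℝ) : ℂ) * x j := by
          rw [Finset.mul_sum]
          exact Finset.sum_congr rfl fun j _ => by ring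
  have hWpsi : ∀ x : Fin n → ℂ, (∑ i, ((w i : ℝ) : ℂ) * (ψ x) i) = 0 := by
    intro x
    have h1 : ∀ i, ((w i : ℝ) : ℂ) * (ψ x) i =
        ((w i : ℝ) : ℂ) * (A *ᵥ x) i - ((δ₀ : ℝ) : ℂ) * (((w i : ℝ) : ℂ) * x i) := by
      intro i
      rw [hψdef]
      simp only [Pi.sub_apply, Pi.smul_apply, smul_eq_mul]
      ring
    rw [Finset.sum_congr rfl fun i _ => h1 i, Finset.sum_sub_distrib, hWA, ← Finset.mul_sum,
      sub_self]
  have hSne : (∑ i, ((w i : ℝ) : ℂ) * u' i) ≠ 0 := by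
    have hpos : (0 : ℝ) < ∑ i, w i * u i :=
      Finset.sum_pos (fun i _ => mul_pos (hw i) (hu i)) ⟨⟨0, hn⟩, Finset.mem_univ _⟩
    have : (∑ i, ((w i : ℝ) : ℂ) * u' i) = ((∑ i, w i * u i : ℝ) : ℂ) := by
      push_cast [hu']
      rfl
    rw [this]
    exact_mod_cast hpos.ne'
  have hker2 : ∀ v, ψ (ψ v) = 0 → ψ v = 0 := by
    intro v hv2
    have hy : ψ v ∈ LinearMap.ker ψ := LinearMap.mem_ker.mpr hv2
    rw [hkspan, Submodule.mem_span_singleton] at hy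
    obtain ⟨c, hcy⟩ := hy
    have h0 := hWpsi v
    rw [← hcy] at h0
    have hsum : (∑ i, ((w i : ℝ) : ℂ) * (c • u') i) = c * ∑ i, ((w i : ℝ) : ℂ) * u' i := by
      rw [Finset.mul_sum]
      exact Finset.sum_congr rfl fun i _ => by
        simp only [Pi.smul_apply, smul_eq_mul]; ring
    rw [hsum] at h0
    rcases mul_eq_zero.mp h0 with hc0 | hS
    · rw [← hcy, hc0, zero_smul]
    · exact absurd hS hSne
  have hkerpow : ∀ k : ℕ, LinearMap.ker (ψ ^ (k + 1)) = LinearMap.ker ψ := by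
    intro k
    induction k with
    | zero => rw [pow_one]
    | succ k ih =>
      apply le_antisymm
      · intro v hv
        rw [LinearMap.mem_ker] at hv ⊢
        have h1 : (ψ ^ (k + 1)) (ψ v) = 0 := by
          rw [← Module.End.mul_apply, ← pow_succ]
          exact hv
        have h2 : ψ v ∈ LinearMap.ker ψ := ih ▸ LinearMap.mem_ker.mpr h1
        exact hker2 v (LinearMap.mem_ker.mp h2)
      · intro v hv
        rw [LinearMap.mem_ker] at hv ⊢
        rw [pow_succ, Module.End.mul_apply, hv, map_zero]
  have hmax : Module.End.maxGenEigenspace ψ 0 = LinearMap.ker ψ := by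
    apply le_antisymm
    · intro x hx
      rw [Module.End.mem_maxGenEigenspace] at hx
      obtain ⟨k, hk⟩ := hx
      simp only [zero_smul, sub_zero] at hk
      cases k with
      | zero =>
        rw [pow_zero, Module.End.one_apply] at hk
        rw [LinearMap.mem_ker, hk, map_zero]
      | succ k => exact (hkerpow k) ▸ LinearMap.mem_ker.mpr hk
    · intro x hx
      rw [Module.End.mem_maxGenEigenspace]
      exact ⟨1, by simpa using LinearMap.mem_ker.mp hx⟩
  have hfr : Module.finrank ℂ (Module.End.maxGenEigenspace ψ 0) = 1 := by
    rw [hmax, hkspan]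
    exact finrank_span_singleton hu'ne
  have hcharψ : LinearMap.charpoly ψ = B.charpoly := by
    rw [hψ, ← Matrix.toLin_eq_toLin' (R := ℂ),
      ← LinearMap.charpoly_toMatrix (Matrix.toLin (Pi.basisFun ℂ (Fin n)) (Pi.basisFun ℂ (Fin n)) B) (Pi.basisFun ℂ (Fin n)),
      LinearMap.toMatrix_toLin]
  have hmult := LinearMap.finrank_maxGenEigenspace_zero_eq ψ
  have h1 : Polynomial.natTrailingDegree (B.charpoly) = 1 := by
    rw [← hcharψ, ← hmult, hfr]
  rw [Polynomial.rootMultiplicity_eq_natTrailingDegree, PFAux.charpoly_shift]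
  exact h1
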